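/- Let G be a deterministic first-order grammar over nonterminals N and let E = E(x₁,…,xₙ), F = F(x₁,…,xₙ) be regular terms over N. Extend G with fresh nullary nonterminals L₁,…,Lₙ (not occurring in E, F) and fresh pairwise distinct actions ℓ₁,…,ℓₙ, where the only rule for each L_i is L_i →^{ℓ_i} L_i (so L_i ≁₁ V for every term V ≠ L_i). Then for all ground regular terms T₁,…,Tₙ over N: eqlevel(E(L₁,…,Lₙ), F(L₁,…,Lₙ)) ≤ eqlevel(E(T₁,…,Tₙ), F(T₁,…,Tₙ)) in ℕ ∪ {ω}, computed in the LTS of the extended grammar. -/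

import Mathlib

namespace FOGPaper

variable {S A : Type*}

/-- Extension of the single-step transition relations to words. -/
def Steps (tr : A → S → S → Prop) : List A → S → S → Prop
  | [], s, t => t = s
  | a :: w, s, t => ∃ s', tr a s s' ∧ Steps tr w s' t

/-- The trace set of a state: the finite words it enables. -/
def traces (tr : A → S → S → Prop) (s : S) : Set (List A) :=
  {w | ∃ t, Steps tr w s t}

/-- The traces of length at most `k`. -/
def tracesLe (tr : A → S → S → Prop) (k : ℕ) (s : S) : Set (List A) :=
  {w ∈ traces tr s | w.length ≤ k}

/-- `r ∼ₖ s` : `r` and `s` enable the same words of length at most `k`. -/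
def SimK (tr : A → S → S → Prop) (k : ℕ) (r s : S) : Prop :=
  tracesLe tr k r = tracesLe tr k s

/-- `r ∼ s` : trace equivalence. -/
def Sim (tr : A → S → S → Prop) (r s : S) : Prop :=
  traces tr r = traces tr s

/-- The equivalence level in ℕ ∪ {ω}: the supremum of the `k` with `r ∼ₖ s`
(equal to `k` iff `r ∼ₖ s` and not `r ∼ₖ₊₁ s`, and to `ω = ⊤` iff `r ∼ s`). -/
noncomputable def eqLevel (tr : A → S → S → Prop) (r s : S) : ℕ∞ :=
  ⨆ k ∈ {k : ℕ | SimK tr k r s}, (k : ℕ∞)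

/-- The offending words for `(r,s)` : the shortest words lying in exactly one of
`traces r`, `traces s`. -/
def offWords (tr : A → S → S → Prop) (r s : S) : Set (List A) :=
  {w | w ∈ (traces tr r \ traces tr s) ∪ (traces tr s \ traces tr r) ∧
       ∀ v ∈ (traces tr r \ traces tr s) ∪ (traces tr s \ traces tr r),
         w.length ≤ v.length}

/-- A labelled transition system is deterministic if each `→ᵃ` is a partial function. -/
def IsDet (tr : A → S → S → Prop) : Prop :=
  ∀ a r s₁ s₂, tr a r s₁ → tr a r s₂ → s₁ = s₂

/-- The infinite traces (ω-words enabled in a state). -/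
def omTraces (tr : A → S → S → Prop) (s : S) : Set (ℕ → A) :=
  {α | ∃ f : ℕ → S, f 0 = s ∧ ∀ i, tr (α i) (f i) (f (i + 1))}

/-- Concatenation of a finite word with an infinite word. -/
def wApp (u : List A) (α : ℕ → A) : ℕ → A := fun i =>
  if h : i < u.length then u[i]'h else α (i - u.length)


/-- Possibly-infinite terms over nonterminals `N` (and variables `x₁, x₂, …`),
represented as partial labelling functions on positions (`Sum.inr i` is the
variable `xᵢ`). -/
abbrev Tm (N : Type*) := List ℕ → Option (N ⊕ ℕ)

/-- Arity of a label: nonterminals have their arity, variables have arity 0. -/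
def arityOf {N : Type*} (arity : N → ℕ) : N ⊕ ℕ → ℕ
  | Sum.inl X => arity X
  | Sum.inr _ => 0

/-- Well-formed term: the domain is nonempty (contains the root) and matches the
arities of the labels (which makes it prefix-closed). -/
def TmWF {N : Type*} (arity : N → ℕ) (E : Tm N) : Prop :=
  (E []).isSome ∧
    ∀ γ i, (E (γ ++ [i])).isSome ↔ ∃ v, E γ = some v ∧ 1 ≤ i ∧ i ≤ arityOf arity v

/-- The subterm (occurrence) of `E` at position `γ`. -/
def subAt {N : Type*} (E : Tm N) (γ : List ℕ) : Tm N := fun δ => E (γ ++ δ)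

/-- A term is regular if it has only finitely many subterms. -/
def TmRegular {N : Type*} (E : Tm N) : Prop := (Set.range (subAt E)).Finite

/-- A term is finite if its domain is finite. -/
def TmFinite {N : Type*} (E : Tm N) : Prop := {γ | (E γ).isSome}.Finite

/-- A term is ground if no variable occurs in it. -/
def TmGround {N : Type*} (E : Tm N) : Prop := ∀ γ i, E γ ≠ some (Sum.inr i)

/-- `E = E(x₁,…,xₙ)` : all variables occurring in `E` are among `x₁,…,xₙ`. -/
def VarsBdd {N : Type*} (n : ℕ) (E : Tm N) : Prop :=
  ∀ γ i, E γ = some (Sum.inr i) → 1 ≤ i ∧ i ≤ n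

/-- The term consisting of the single variable `xᵢ`. -/
def varTm (N : Type*) (i : ℕ) : Tm N := fun γ => if γ = [] then some (Sum.inr i) else none

open Classical in
/-- Substitution `E σ`: each occurrence of the variable `xᵢ` is replaced by `σ i`.
(For a well-formed `E`, the decomposition of a position through a variable
occurrence is unique, so the choice is canonical.) -/
noncomputable def subst {N : Type*} (E : Tm N) (σ : ℕ → Tm N) : Tm N := fun γ =>
  if h : ∃ p : List ℕ × ℕ × List ℕ, γ = p.1 ++ p.2.2 ∧ E p.1 = some (Sum.inr p.2.1)
  then σ h.choose.2.1 h.choose.2.2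
  else E γ

/-- The term `X G₁ G₂ …` with root `X` and `i`-th child `Gs i`. -/
def node {N : Type*} (X : N) (Gs : ℕ → Tm N) : Tm N := fun γ =>
  match γ with
  | [] => some (Sum.inl X)
  | i :: δ => Gs i δ

/-- A first-order grammar: ranked nonterminals and a finite set of root-rewriting
rules `X x₁ … xₘ →ᵃ E` where `E` is a finite term with variables among `x₁,…,xₘ`,
`m = arity X`. -/
structure FOG (N A : Type*) where
  arity : N → ℕ
  rules : Set (N × A × Tm N)
  rules_fin : rules.Finite
  rules_wf : ∀ r ∈ rules, TmFinite r.2.2 ∧ TmWF arity r.2.2 ∧ VarsBdd (arity r.1) r.2.2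

/-- A grammar is deterministic: at most one rule for each pair `(X, a)`. -/
def FOG.Det {N A : Type*} (G : FOG N A) : Prop :=
  ∀ X a E E', (X, a, E) ∈ G.rules → (X, a, E') ∈ G.rules → E = E'

/-- The transition relation of the LTS `L_G` generated by the grammar `G` on terms:
each rule `X x₁ … xₘ →ᵃ E` gives `X G₁ … Gₘ →ᵃ E(G₁,…,Gₘ)`. -/
def gstep {N A : Type*} (G : FOG N A) (a : A) (s t : Tm N) : Prop :=
  ∃ X E Gs, (X, a, E) ∈ G.rules ∧ s = node X Gs ∧ t = subst E Gs


/-- Renaming of nonterminals in a term. -/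
def embTm {N M : Type*} (f : N → M) (E : Tm N) : Tm M :=
  fun γ => (E γ).map (Sum.map f id)

/-- The (ground, nullary) term `Lᵢ`, for a fresh nonterminal `Lᵢ = Sum.inr i`. -/
def constL (N : Type*) (n : ℕ) (i : Fin n) : Tm (N ⊕ Fin n) :=
  fun γ => if γ = [] then some (Sum.inl (Sum.inr i)) else none

/-- The substitution `[L₁/x₁, …, Lₙ/xₙ]` producing the critical instance. -/
def sigmaL (N : Type*) (n : ℕ) : ℕ → Tm (N ⊕ Fin n) := fun j =>
  if h : 1 ≤ j ∧ j ≤ n then constL N n ⟨j - 1, by omega⟩ else varTm (N ⊕ Fin n) j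

/-! ### Auxiliary development -/

section Aux

variable {N₀ : Type*}

/-- Unique decomposability: any two variable occurrences that are prefixes of a
common position coincide. -/
def UD (E : Tm N₀) : Prop :=
  ∀ β₁ δ₁ j₁ β₂ δ₂ j₂, β₁ ++ δ₁ = β₂ ++ δ₂ →
    E β₁ = some (Sum.inr j₁) → E β₂ = some (Sum.inr j₂) → β₁ = β₂

lemma subst_at_var {E : Tm N₀} (hE : UD E) {β : List ℕ} {j : ℕ}
    (h : E β = some (Sum.inr j)) (σ : ℕ → Tm N₀) (δ : List ℕ) :
    subst E σ (β ++ δ) = σ j δ := by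
  have hex : ∃ p : List ℕ × ℕ × List ℕ, β ++ δ = p.1 ++ p.2.2 ∧ E p.1 = some (Sum.inr p.2.1) :=
    ⟨(β, j, δ), rfl, h⟩
  rw [subst, dif_pos hex]
  obtain ⟨h1, h2⟩ := hex.choose_spec
  have hb : hex.choose.1 = β := hE _ _ _ _ _ _ h1.symm h2 h
  rw [hb] at h1 h2
  have hj : hex.choose.2.1 = j := by
    have := h2.symm.trans h
    exact Sum.inr.inj (Option.some.inj this)
  have hδ : hex.choose.2.2 = δ := (List.append_cancel_left h1.symm)
  rw [hj, hδ]

lemma subst_eq_self {E : Tm N₀} {γ : List ℕ} (σ : ℕ → Tm N₀)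
    (h : ∀ β δ j, γ = β ++ δ → E β ≠ some (Sum.inr j)) : subst E σ γ = E γ := by
  rw [subst, dif_neg]
  rintro ⟨p, h1, h2⟩
  exact h _ _ _ h1 h2

lemma subst_root {E : Tm N₀} (σ : ℕ → Tm N₀)
    (h : ∀ j, E [] ≠ some (Sum.inr j)) : subst E σ [] = E [] := by
  apply subst_eq_self
  intro β δ j hβ
  obtain ⟨hβ1, -⟩ := List.append_eq_nil_iff.mp hβ.symm
  rw [hβ1]; exact h j

lemma subst_cases (E : Tm N₀) (σ : ℕ → Tm N₀) (γ : List ℕ) :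
    (∃ β j δ, γ = β ++ δ ∧ E β = some (Sum.inr j) ∧ subst E σ γ = σ j δ) ∨
      (subst E σ γ = E γ ∧ ∀ β δ j, γ = β ++ δ → E β ≠ some (Sum.inr j)) := by
  by_cases h : ∃ p : List ℕ × ℕ × List ℕ, γ = p.1 ++ p.2.2 ∧ E p.1 = some (Sum.inr p.2.1)
  · left
    obtain ⟨h1, h2⟩ := h.choose_spec
    exact ⟨h.choose.1, h.choose.2.1, h.choose.2.2, h1, h2, by rw [subst, dif_pos h]⟩
  · right
    refine ⟨by rw [subst, dif_neg h], ?_⟩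
    intro β δ j hβ hv
    exact h ⟨(β, j, δ), hβ, hv⟩

lemma subst_var_iff {E : Tm N₀} (hE : UD E) (σ : ℕ → Tm N₀) (γ : List ℕ) (j : ℕ) :
    subst E σ γ = some (Sum.inr j) ↔
      ∃ β q δ, γ = β ++ δ ∧ E β = some (Sum.inr q) ∧ σ q δ = some (Sum.inr j) := by
  constructor
  · intro h
    rcases subst_cases E σ γ with ⟨β, q, δ, hγ, hv, hval⟩ | ⟨hval, hno⟩
    · exact ⟨β, q, δ, hγ, hv, by rw [← hval, h]⟩
    · exact absurd (hval ▸ h) (hno γ [] j (List.append_nil γ).symm)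
  · rintro ⟨β, q, δ, hγ, hv, hσ⟩
    rw [hγ, subst_at_var hE hv σ δ, hσ]

lemma UD_subAt {E : Tm N₀} (hE : UD E) (γ : List ℕ) : UD (subAt E γ) := by
  intro β₁ δ₁ j₁ β₂ δ₂ j₂ happ h1 h2
  have : (γ ++ β₁) ++ δ₁ = (γ ++ β₂) ++ δ₂ := by
    rw [List.append_assoc, List.append_assoc, happ]
  exact List.append_cancel_left (hE _ _ _ _ _ _ this h1 h2)

lemma UD_subst {E : Tm N₀} {Gs : ℕ → Tm N₀} (hE : UD E) (hGs : ∀ q, UD (Gs q)) :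
    UD (subst E Gs) := by
  intro β₁ δ₁ j₁ β₂ δ₂ j₂ happ h1 h2
  rw [subst_var_iff hE] at h1 h2
  obtain ⟨b₁, q₁, d₁, hb₁, hv₁, hg₁⟩ := h1
  obtain ⟨b₂, q₂, d₂, hb₂, hv₂, hg₂⟩ := h2
  rw [hb₁, hb₂] at happ
  rw [List.append_assoc, List.append_assoc] at happ
  have hbb : b₁ = b₂ := hE _ _ _ _ _ _ happ hv₁ hv₂
  subst hbb
  have hq : q₁ = q₂ := Sum.inr.inj (Option.some.inj (hv₁.symm.trans hv₂))
  subst hq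
  have hdd : d₁ ++ δ₁ = d₂ ++ δ₂ := List.append_cancel_left happ
  have : d₁ = d₂ := hGs q₁ _ _ _ _ _ _ hdd hg₁ hg₂
  rw [hb₁, hb₂, this]

lemma subst_subst {E : Tm N₀} {Gs : ℕ → Tm N₀} (hE : UD E) (hGs : ∀ q, UD (Gs q))
    (σ : ℕ → Tm N₀) :
    subst (subst E Gs) σ = subst E (fun q => subst (Gs q) σ) := by
  funext γ
  rcases subst_cases (subst E Gs) σ γ with ⟨β, j, δ, hγ, hv, hval⟩ | ⟨hval, hno⟩
  · obtain ⟨b, q, d, hb, hvb, hgd⟩ := (subst_var_iff hE Gs β j).mp hv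
    rw [hval, hγ, hb, List.append_assoc]
    rw [subst_at_var hE hvb _ (d ++ δ), subst_at_var (hGs q) hgd σ δ]
  · rw [hval]
    rcases subst_cases E Gs γ with ⟨b, q, d, hb, hvb, hval'⟩ | ⟨hval', hno'⟩
    · rw [hval', hb, subst_at_var hE hvb _ d]
      symm
      apply subst_eq_self
      intro d₀ ρ j hd hv0
      refine hno (b ++ d₀) ρ j ?_ ?_
      · rw [hb, hd, List.append_assoc]
      · rw [subst_at_var hE hvb Gs d₀, hv0]
    · rw [hval']
      exact (subst_eq_self _ hno').symm

lemma wf_none {ar : N₀ → ℕ} {E : Tm N₀} (hwf : TmWF ar E) {γ : List ℕ}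
    (hγ : E γ = none) : ∀ δ, E (γ ++ δ) = none := by
  intro δ
  induction δ using List.reverseRecOn with
  | nil => simpa using hγ
  | append_singleton δ' i ih =>
    by_contra h
    have hs : (E ((γ ++ δ') ++ [i])).isSome := by
      rw [List.append_assoc]
      exact Option.ne_none_iff_isSome.mp h
    obtain ⟨v, hv, -⟩ := (hwf.2 (γ ++ δ') i).mp hs
    rw [ih] at hv
    cases hv

lemma UD_of_wf {ar : N₀ → ℕ} {E : Tm N₀} (hwf : TmWF ar E) : UD E := by
  have key : ∀ (β : List ℕ) (ρ : List ℕ) (j₁ : ℕ), E β = some (Sum.inr j₁) →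
      (E (β ++ ρ)).isSome → ρ = [] := by
    intro β ρ j₁ h1 h2
    cases ρ with
    | nil => rfl
    | cons i ρ' =>
      exfalso
      have hnone : E (β ++ [i]) = none := by
        by_contra h
        obtain ⟨v, hv, hi1, hi2⟩ := (hwf.2 β i).mp (Option.ne_none_iff_isSome.mp h)
        rw [h1] at hv
        cases hv
        simp [arityOf] at hi2
        omega
      have := wf_none hwf hnone ρ'
      rw [List.append_assoc] at this
      simp only [List.singleton_append] at this
      rw [this] at h2
      simp at h2
  intro β₁ δ₁ j₁ β₂ δ₂ j₂ happ h1 h2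
  have hp1 : β₁ <+: β₂ ++ δ₂ := happ ▸ ⟨δ₁, rfl⟩
  have hp2 : β₂ <+: β₂ ++ δ₂ := ⟨δ₂, rfl⟩
  rcases List.prefix_or_prefix_of_prefix hp1 hp2 with h | h
  · obtain ⟨ρ, hρ⟩ := h
    have := key β₁ ρ j₁ h1 (by rw [hρ, h2]; rfl)
    rw [this, List.append_nil] at hρ
    exact hρ
  · obtain ⟨ρ, hρ⟩ := h
    have := key β₂ ρ j₂ h2 (by rw [hρ, h1]; rfl)
    rw [this, List.append_nil] at hρ
    exact hρ.symm

lemma subst_of_root_var {E : Tm N₀} (hE : UD E) {i : ℕ}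
    (hroot : E [] = some (Sum.inr i)) (σ : ℕ → Tm N₀) : subst E σ = σ i := by
  funext γ
  have := subst_at_var hE hroot σ γ
  rwa [List.nil_append] at this

lemma subAt_subst {E : Tm N₀} (hE : UD E)
    (hroot : ∀ j, E [] ≠ some (Sum.inr j)) (σ : ℕ → Tm N₀) (i : ℕ) :
    subAt (subst E σ) [i] = subst (subAt E [i]) σ := by
  funext δ
  show subst E σ ([i] ++ δ) = _
  rcases subst_cases E σ ([i] ++ δ) with ⟨β, j, δ', hγ, hv, hval⟩ | ⟨hval, hno⟩
  · cases β with
    | nil => exact absurd hv (hroot j)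
    | cons b β' =>
      rw [List.singleton_append, List.cons_append] at hγ
      have hbi : i = b := (List.cons.injEq _ _ _ _ ▸ hγ).1
      have hδ : δ = β' ++ δ' := (List.cons.injEq _ _ _ _ ▸ hγ).2
      rw [hval, hδ]
      have hv' : subAt E [i] β' = some (Sum.inr j) := by
        show E ([i] ++ β') = _
        rw [List.singleton_append, hbi]
        exact hv
      exact (subst_at_var (UD_subAt hE [i]) hv' σ δ').symm
  · rw [hval]
    show _ = subst (subAt E [i]) σ δ
    rw [subst_eq_self]
    · rfl
    intro β' ρ j hd hv0
    refine hno (i :: β') ρ j (by rw [hd]; rfl) ?_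
    have : E ([i] ++ β') = some (Sum.inr j) := hv0
    rwa [List.singleton_append] at this

lemma embTm_var {M : Type*} (f : N₀ → M) (E : Tm N₀) (γ : List ℕ) (j : ℕ) :
    embTm f E γ = some (Sum.inr j) ↔ E γ = some (Sum.inr j) := by
  unfold embTm
  cases h : E γ with
  | none => simp
  | some v =>
    cases v with
    | inl X => simp [Sum.map]
    | inr m => simp [Sum.map]

lemma UD_embTm {M : Type*} (f : N₀ → M) {E : Tm N₀} (hE : UD E) : UD (embTm f E) := by
  intro β₁ δ₁ j₁ β₂ δ₂ j₂ happ h1 h2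
  rw [embTm_var] at h1 h2
  exact hE _ _ _ _ _ _ happ h1 h2

end Aux

section Gram

variable {Nb Ab : Type*} {n : ℕ} {G : FOG Nb Ab} {G' : FOG (Nb ⊕ Fin n) (Ab ⊕ Fin n)}

/-- The invariant maintained on open terms. -/
def Inv (n : ℕ) (H : Tm (Nb ⊕ Fin n)) : Prop :=
  UD H ∧ VarsBdd n H ∧ ∀ γ i, H γ ≠ some (Sum.inl (Sum.inr i))

lemma gstep_iff {N₁ A₁ : Type*} (G₂ : FOG N₁ A₁) (a : A₁) (s t : Tm N₁) :
    gstep G₂ a s t ↔ ∃ X B, (X, a, B) ∈ G₂.rules ∧ s [] = some (Sum.inl X) ∧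
      t = subst B (fun i => subAt s [i]) := by
  constructor
  · rintro ⟨X, B, Gs, hr, hs, ht⟩
    have hG : Gs = fun i => subAt s [i] := by
      funext i δ
      show Gs i δ = s ([i] ++ δ)
      rw [hs, List.singleton_append]
      rfl
    exact ⟨X, B, hr, by rw [hs]; rfl, by rw [ht, hG]⟩
  · rintro ⟨X, B, hr, hs, ht⟩
    refine ⟨X, B, fun i => subAt s [i], hr, ?_, ht⟩
    funext γ
    cases γ with
    | nil => rw [hs]; rfl
    | cons i δ => rfl

variable (G n) in
abbrev RULES : Set ((Nb ⊕ Fin n) × (Ab ⊕ Fin n) × Tm (Nb ⊕ Fin n)) :=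
  (((fun r : Nb × Ab × Tm Nb =>
          ((Sum.inl r.1 : Nb ⊕ Fin n),
            ((Sum.inl r.2.1 : Ab ⊕ Fin n), embTm (Sum.inl : Nb → Nb ⊕ Fin n) r.2.2)))
        '' G.rules) ∪
      (Set.range fun i : Fin n =>
        ((Sum.inr i : Nb ⊕ Fin n), ((Sum.inr i : Ab ⊕ Fin n), constL Nb n i))))

lemma rules_inl (hrules : G'.rules = RULES n G) {X : Nb} {a : Ab ⊕ Fin n} {B : Tm (Nb ⊕ Fin n)}
    (h : ((Sum.inl X : Nb ⊕ Fin n), a, B) ∈ G'.rules) :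
    ∃ a₀ B₀, a = Sum.inl a₀ ∧ B = embTm Sum.inl B₀ ∧ (X, a₀, B₀) ∈ G.rules := by
  rw [hrules] at h
  rcases h with ⟨r, hr, heq⟩ | ⟨i, heq⟩
  · obtain ⟨h1, h2, h3⟩ : Sum.inl r.1 = Sum.inl X ∧ Sum.inl r.2.1 = a ∧
        embTm Sum.inl r.2.2 = B := by
      refine ⟨congrArg Prod.fst heq, ?_, ?_⟩
      · exact congrArg Prod.fst (congrArg Prod.snd heq)
      · exact congrArg Prod.snd (congrArg Prod.snd heq)
    refine ⟨r.2.1, r.2.2, h2.symm, h3.symm, ?_⟩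
    have : r = (X, r.2.1, r.2.2) := by
      rw [← Sum.inl.inj h1]
    rw [← this]; exact hr
  · exact absurd (congrArg Prod.fst heq) (by simp)

lemma rules_inr_act (hrules : G'.rules = RULES n G) {X : Nb ⊕ Fin n} {B : Tm (Nb ⊕ Fin n)}
    {i : Fin n} (h : (X, (Sum.inr i : Ab ⊕ Fin n), B) ∈ G'.rules) :
    X = Sum.inr i ∧ B = constL Nb n i := by
  rw [hrules] at h
  rcases h with ⟨r, hr, heq⟩ | ⟨i', heq⟩
  · exact absurd (congrArg Prod.fst (congrArg Prod.snd heq)) (by simp)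
  · have h1 : Sum.inr i' = X := congrArg Prod.fst heq
    have h2 : (Sum.inr i' : Ab ⊕ Fin n) = Sum.inr i :=
      congrArg Prod.fst (congrArg Prod.snd heq)
    have h3 : constL Nb n i' = B := congrArg Prod.snd (congrArg Prod.snd heq)
    have : i' = i := Sum.inr.inj h2
    subst this
    exact ⟨h1.symm, h3.symm⟩

lemma rules_inr_nt (hrules : G'.rules = RULES n G) {a : Ab ⊕ Fin n} {B : Tm (Nb ⊕ Fin n)}
    {i : Fin n} (h : ((Sum.inr i : Nb ⊕ Fin n), a, B) ∈ G'.rules) :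
    a = Sum.inr i ∧ B = constL Nb n i := by
  rw [hrules] at h
  rcases h with ⟨r, hr, heq⟩ | ⟨i', heq⟩
  · exact absurd (congrArg Prod.fst heq) (by simp)
  · have h1 : (Sum.inr i' : Nb ⊕ Fin n) = Sum.inr i := congrArg Prod.fst heq
    have : i' = i := Sum.inr.inj h1
    subst this
    exact ⟨(congrArg Prod.fst (congrArg Prod.snd heq)).symm,
      (congrArg Prod.snd (congrArg Prod.snd heq)).symm⟩

lemma rules_mem_inl (hrules : G'.rules = RULES n G) {X : Nb} {a₀ : Ab} {B₀ : Tm Nb}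
    (h : (X, a₀, B₀) ∈ G.rules) :
    ((Sum.inl X : Nb ⊕ Fin n), (Sum.inl a₀ : Ab ⊕ Fin n), embTm Sum.inl B₀) ∈ G'.rules := by
  rw [hrules]
  exact Or.inl ⟨(X, a₀, B₀), h, rfl⟩

lemma rules_mem_inr (hrules : G'.rules = RULES n G) (i : Fin n) :
    ((Sum.inr i : Nb ⊕ Fin n), (Sum.inr i : Ab ⊕ Fin n), constL Nb n i) ∈ G'.rules := by
  rw [hrules]
  exact Or.inr ⟨i, rfl⟩

lemma det' (hdet : G.Det) (hrules : G'.rules = RULES n G) : G'.Det := by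
  intro Z a B₁ B₂ h1 h2
  cases Z with
  | inl X =>
    obtain ⟨a₁, C₁, ha₁, hB₁, hr₁⟩ := rules_inl hrules h1
    obtain ⟨a₂, C₂, ha₂, hB₂, hr₂⟩ := rules_inl hrules h2
    have : a₁ = a₂ := Sum.inl.inj (ha₁.symm.trans ha₂)
    subst this
    rw [hB₁, hB₂, hdet X a₁ C₁ C₂ hr₁ hr₂]
  | inr i =>
    obtain ⟨-, hB₁⟩ := rules_inr_nt hrules h1
    obtain ⟨-, hB₂⟩ := rules_inr_nt hrules h2
    rw [hB₁, hB₂]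

lemma gstep_det (hdet : G.Det) (hrules : G'.rules = RULES n G) : IsDet (gstep G') := by
  intro a s t₁ t₂ h₁ h₂
  rw [gstep_iff] at h₁ h₂
  obtain ⟨X₁, B₁, hr₁, hs₁, ht₁⟩ := h₁
  obtain ⟨X₂, B₂, hr₂, hs₂, ht₂⟩ := h₂
  have hX : X₁ = X₂ := Sum.inl.inj (Option.some.inj (hs₁.symm.trans hs₂))
  subst hX
  have hB : B₁ = B₂ := det' hdet hrules X₁ a B₁ B₂ hr₁ hr₂
  rw [ht₁, ht₂, hB]

lemma ruleB_UD {X : Nb} {a₀ : Ab} {B : Tm Nb} (h : (X, a₀, B) ∈ G.rules) : UD B :=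
  UD_of_wf (G.rules_wf _ h).2.1

/-- The new open term after firing rule `(X, a₀, B)` at the root of `H`. -/
noncomputable def newH (H : Tm (Nb ⊕ Fin n)) (B : Tm Nb) : Tm (Nb ⊕ Fin n) :=
  subst (embTm Sum.inl B) (fun i => subAt H [i])

lemma subst_root_nonvar {H : Tm (Nb ⊕ Fin n)} {v : Nb ⊕ Fin n}
    (hroot : H [] = some (Sum.inl v)) (σ : ℕ → Tm (Nb ⊕ Fin n)) :
    subst H σ [] = some (Sum.inl v) := by
  rw [subst_root σ (fun j h => by rw [hroot] at h; cases h), hroot]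

lemma subst_root_none {H : Tm (Nb ⊕ Fin n)}
    (hroot : H [] = none) (σ : ℕ → Tm (Nb ⊕ Fin n)) :
    subst H σ [] = none := by
  rw [subst_root σ (fun j h => by rw [hroot] at h; cases h), hroot]

lemma stepA_fwd (hrules : G'.rules = RULES n G) {H : Tm (Nb ⊕ Fin n)} (hUD : UD H)
    {X : Nb} (hroot : H [] = some (Sum.inl (Sum.inl X)))
    {σ : ℕ → Tm (Nb ⊕ Fin n)} {a : Ab ⊕ Fin n} {t : Tm (Nb ⊕ Fin n)}
    (h : gstep G' a (subst H σ) t) :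
    ∃ a₀ B, a = Sum.inl a₀ ∧ (X, a₀, B) ∈ G.rules ∧ t = subst (newH H B) σ := by
  rw [gstep_iff] at h
  obtain ⟨X', B', hr, hs, ht⟩ := h
  have hX' : X' = Sum.inl X := by
    have := (subst_root_nonvar hroot σ).symm.trans hs
    exact (Sum.inl.inj (Option.some.inj this)).symm
  subst hX'
  obtain ⟨a₀, B₀, ha, hB, hr₀⟩ := rules_inl hrules hr
  refine ⟨a₀, B₀, ha, hr₀, ?_⟩
  have hnv : ∀ j, H [] ≠ some (Sum.inr j) := fun j hj => by rw [hroot] at hj; cases hj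
  have hfun : (fun i => subAt (subst H σ) [i]) = fun i => subst (subAt H [i]) σ := by
    funext i
    exact subAt_subst hUD hnv σ i
  rw [ht, hB, hfun, newH,
    subst_subst (UD_embTm Sum.inl (ruleB_UD hr₀)) (fun q => UD_subAt hUD [q]) σ]

lemma stepA_bwd (hrules : G'.rules = RULES n G) {H : Tm (Nb ⊕ Fin n)} (hUD : UD H)
    {X : Nb} (hroot : H [] = some (Sum.inl (Sum.inl X)))
    {a₀ : Ab} {B : Tm Nb} (hr : (X, a₀, B) ∈ G.rules) (σ : ℕ → Tm (Nb ⊕ Fin n)) :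
    gstep G' (Sum.inl a₀) (subst H σ) (subst (newH H B) σ) := by
  rw [gstep_iff]
  refine ⟨Sum.inl X, embTm Sum.inl B, rules_mem_inl hrules hr,
    subst_root_nonvar hroot σ, ?_⟩
  have hnv : ∀ j, H [] ≠ some (Sum.inr j) := fun j hj => by rw [hroot] at hj; cases hj
  have hfun : (fun i => subAt (subst H σ) [i]) = fun i => subst (subAt H [i]) σ := by
    funext i
    exact subAt_subst hUD hnv σ i
  rw [hfun, newH,
    subst_subst (UD_embTm Sum.inl (ruleB_UD hr)) (fun q => UD_subAt hUD [q]) σ]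

lemma VarsBdd_subAt {H : Tm (Nb ⊕ Fin n)} (h : VarsBdd n H) (γ : List ℕ) :
    VarsBdd n (subAt H γ) := fun δ i hδ => h (γ ++ δ) i hδ

lemma inv_new {H : Tm (Nb ⊕ Fin n)} (hInv : Inv n H) {X : Nb} {a₀ : Ab} {B : Tm Nb}
    (hr : (X, a₀, B) ∈ G.rules) : Inv n (newH H B) := by
  obtain ⟨hUD, hVB, hIO⟩ := hInv
  have hBud : UD (embTm (Sum.inl : Nb → Nb ⊕ Fin n) B) := UD_embTm Sum.inl (ruleB_UD hr)
  refine ⟨UD_subst hBud (fun q => UD_subAt hUD [q]), ?_, ?_⟩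
  · intro γ j h
    rw [newH, subst_var_iff hBud] at h
    obtain ⟨β, q, δ, -, -, hg⟩ := h
    exact hVB _ j hg
  · intro γ i h
    rcases subst_cases (embTm Sum.inl B) (fun i => subAt H [i]) γ with
      ⟨β, q, δ, -, -, hval⟩ | ⟨hval, -⟩
    · rw [newH, hval] at h
      exact hIO _ i h
    · rw [newH, hval] at h
      unfold embTm at h
      cases hb : B γ with
      | none => rw [hb] at h; cases h
      | some v =>
        cases v with
        | inl Y => rw [hb] at h; simp [Sum.map] at h
        | inr m => rw [hb] at h; simp [Sum.map] at h

lemma constL_step (hrules : G'.rules = RULES n G) (i : Fin n) :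
    gstep G' (Sum.inr i) (constL Nb n i) (constL Nb n i) := by
  rw [gstep_iff]
  refine ⟨Sum.inr i, constL Nb n i, rules_mem_inr hrules i, rfl, ?_⟩
  symm
  funext γ
  apply subst_eq_self
  intro β δ j hβ hv
  unfold constL at hv
  by_cases hb : β = [] <;> simp [hb] at hv

lemma constL_only (hrules : G'.rules = RULES n G) {i : Fin n} {a : Ab ⊕ Fin n}
    {t : Tm (Nb ⊕ Fin n)} (h : gstep G' a (constL Nb n i) t) : a = Sum.inr i := by
  rw [gstep_iff] at h
  obtain ⟨X', B', hr, hs, -⟩ := h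
  have : X' = Sum.inr i := by
    unfold constL at hs
    simp at hs
    exact hs.symm
  subst this
  exact (rules_inr_nt hrules hr).1

lemma action_inr_root (hrules : G'.rules = RULES n G) {i : Fin n}
    {s t : Tm (Nb ⊕ Fin n)} (h : gstep G' (Sum.inr i) s t) :
    s [] = some (Sum.inl (Sum.inr i)) := by
  rw [gstep_iff] at h
  obtain ⟨X', B', hr, hs, -⟩ := h
  obtain ⟨hX, -⟩ := rules_inr_act hrules hr
  rwa [hX] at hs

lemma root_of_step {N₁ A₁ : Type*} {G₂ : FOG N₁ A₁} {a : A₁} {s t : Tm N₁}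
    (h : gstep G₂ a s t) : ∃ X, s [] = some (Sum.inl X) := by
  rw [gstep_iff] at h
  obtain ⟨X, B, -, hs, -⟩ := h
  exact ⟨X, hs⟩

lemma sigmaL_eq {i : ℕ} (h1 : 1 ≤ i) (h2 : i ≤ n) :
    sigmaL Nb n i = constL Nb n ⟨i - 1, by omega⟩ := dif_pos ⟨h1, h2⟩

end Gram

section Traces

variable {S A : Type*} {tr : A → S → S → Prop}

lemma nil_mem_traces (s : S) : [] ∈ traces tr s := ⟨s, rfl⟩

lemma cons_mem_traces {a : A} {w : List A} {s : S} :
    (a :: w) ∈ traces tr s ↔ ∃ s', tr a s s' ∧ w ∈ traces tr s' := by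
  constructor
  · rintro ⟨t, s', h, hs⟩
    exact ⟨s', h, t, hs⟩
  · rintro ⟨s', h, t, hs⟩
    exact ⟨t, s', h, hs⟩

lemma cons_mem_traces_det (hdet : IsDet tr) {a : A} {s s' : S} (h : tr a s s')
    {w : List A} : (a :: w) ∈ traces tr s ↔ w ∈ traces tr s' := by
  rw [cons_mem_traces]
  constructor
  · rintro ⟨s'', h'', hw⟩
    rwa [hdet a s s'' s' h'' h] at hw
  · intro hw
    exact ⟨s', h, hw⟩

lemma single_mem_traces {a : A} {s s' : S} (h : tr a s s') : [a] ∈ traces tr s :=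
  ⟨s', s', h, rfl⟩

end Traces

section Main

variable {Nb Ab : Type*} {n : ℕ} {G : FOG Nb Ab} {G' : FOG (Nb ⊕ Fin n) (Ab ⊕ Fin n)}

lemma inv_embTm {ar : Nb → ℕ} {E : Tm Nb} (hwf : TmWF ar E) (hvars : VarsBdd n E) :
    Inv n (embTm Sum.inl E) := by
  refine ⟨UD_embTm Sum.inl (UD_of_wf hwf),
    fun γ j h => hvars γ j ((embTm_var _ _ _ _).mp h), ?_⟩
  intro γ i h
  unfold embTm at h
  cases hb : E γ with
  | none => rw [hb] at h; cases h
  | some v =>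
    cases v with
    | inl X => rw [hb] at h; simp [Sum.map] at h
    | inr j => rw [hb] at h; simp [Sum.map] at h

lemma main_transfer (hdet : G.Det) (hrules : G'.rules = RULES n G) :
    ∀ (w : List (Ab ⊕ Fin n)) (σ' : ℕ → Tm (Nb ⊕ Fin n)) (HE HF : Tm (Nb ⊕ Fin n)),
      Inv n HE → Inv n HF →
      (∀ u : List (Ab ⊕ Fin n), u.length ≤ w.length →
        (u ∈ traces (gstep G') (subst HE (sigmaL Nb n)) ↔
         u ∈ traces (gstep G') (subst HF (sigmaL Nb n)))) →
      w ∈ traces (gstep G') (subst HE σ') → w ∈ traces (gstep G') (subst HF σ') := by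
  intro w
  induction w with
  | nil => intro σ' HE HF _ _ _ _; exact nil_mem_traces _
  | cons a w' IH =>
    intro σ' HE HF hInvE hInvF hyp hw
    obtain ⟨sE, hstepE, hwE⟩ := cons_mem_traces.mp hw
    cases hrootE : HE [] with
    | none =>
      exfalso
      obtain ⟨X, hX⟩ := root_of_step hstepE
      rw [subst_root_none hrootE] at hX
      cases hX
    | some v =>
      cases v with
      | inr i =>
        have hi := hInvE.2.1 [] i hrootE
        have hEe : subst HE σ' = σ' i := subst_of_root_var hInvE.1 hrootE σ'
        have hEL : subst HE (sigmaL Nb n) = constL Nb n ⟨i - 1, by omega⟩ := by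
          rw [subst_of_root_var hInvE.1 hrootE, sigmaL_eq hi.1 hi.2]
        have h1 : [Sum.inr (⟨i - 1, by omega⟩ : Fin n)] ∈
            traces (gstep G') (subst HE (sigmaL Nb n)) := by
          rw [hEL]; exact single_mem_traces (constL_step hrules _)
        have h2 := (hyp _ (by simp)).mp h1
        obtain ⟨t0, hst, -⟩ := cons_mem_traces.mp h2
        have hFroot := action_inr_root hrules hst
        cases hrootF : HF [] with
        | none => rw [subst_root_none hrootF] at hFroot; cases hFroot
        | some v' =>
          cases v' with
          | inl z =>
            cases z with
            | inl Y =>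
              rw [subst_root_nonvar hrootF] at hFroot
              simp at hFroot
            | inr m => exact absurd hrootF (hInvF.2.2 [] m)
          | inr j =>
            have hj := hInvF.2.1 [] j hrootF
            have hFeL := subst_of_root_var hInvF.1 hrootF (sigmaL Nb n)
            rw [hFeL, sigmaL_eq hj.1 hj.2] at hFroot
            have hval : j - 1 = i - 1 := by
              have : constL Nb n ⟨j - 1, by omega⟩ [] =
                  some (Sum.inl (Sum.inr (⟨j - 1, by omega⟩ : Fin n))) := rfl
              rw [this] at hFroot
              have := Option.some.inj hFroot
              have := Sum.inr.inj (Sum.inl.inj this)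
              exact congrArg Fin.val this
            have hij : j = i := by omega
            rw [subst_of_root_var hInvF.1 hrootF σ', hij, ← hEe]
            exact hw
      | inl z =>
        cases z with
        | inr m => exact absurd hrootE (hInvE.2.2 [] m)
        | inl X =>
          obtain ⟨a₀, B_E, ha, hrE, htE⟩ := stepA_fwd hrules hInvE.1 hrootE hstepE
          have hEL1 : [Sum.inl a₀] ∈ traces (gstep G') (subst HE (sigmaL Nb n)) :=
            single_mem_traces (stepA_bwd hrules hInvE.1 hrootE hrE _)
          have hFL1 := (hyp _ (by simp)).mp hEL1
          obtain ⟨tF, hstF, -⟩ := cons_mem_traces.mp hFL1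
          cases hrootF : HF [] with
          | none =>
            exfalso
            obtain ⟨X', hX'⟩ := root_of_step hstF
            rw [subst_root_none hrootF] at hX'
            cases hX'
          | some v' =>
            cases v' with
            | inr j =>
              exfalso
              have hj := hInvF.2.1 [] j hrootF
              have hFeL := subst_of_root_var hInvF.1 hrootF (sigmaL Nb n)
              rw [hFeL, sigmaL_eq hj.1 hj.2] at hstF
              have := constL_only hrules hstF
              cases this
            | inl z' =>
              cases z' with
              | inr m => exact absurd hrootF (hInvF.2.2 [] m)
              | inl Y =>
                obtain ⟨a₀', B_F, ha', hrF, htF⟩ := stepA_fwd hrules hInvF.1 hrootF hstF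
                have haa : a₀' = a₀ := Sum.inl.inj ha'.symm
                subst haa
                have hdet' := gstep_det hdet hrules
                have hyp' : ∀ u : List (Ab ⊕ Fin n), u.length ≤ w'.length →
                    (u ∈ traces (gstep G') (subst (newH HE B_E) (sigmaL Nb n)) ↔
                     u ∈ traces (gstep G') (subst (newH HF B_F) (sigmaL Nb n))) := by
                  intro u hu
                  have h := hyp (Sum.inl a₀' :: u) (by simpa using hu)
                  rwa [cons_mem_traces_det hdet' (stepA_bwd hrules hInvE.1 hrootE hrE _),
                    cons_mem_traces_det hdet' (stepA_bwd hrules hInvF.1 hrootF hrF _)] at h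
                have hwE' : w' ∈ traces (gstep G') (subst (newH HE B_E) σ') := by
                  rw [← htE]; exact hwE
                have hres := IH σ' _ _ (inv_new hInvE hrE) (inv_new hInvF hrF) hyp' hwE'
                rw [ha]
                exact cons_mem_traces.mpr ⟨_, stepA_bwd hrules hInvF.1 hrootF hrF σ', hres⟩

lemma simK_transfer (hdet : G.Det) (hrules : G'.rules = RULES n G)
    {HE HF : Tm (Nb ⊕ Fin n)} (hInvE : Inv n HE) (hInvF : Inv n HF)
    (σ' : ℕ → Tm (Nb ⊕ Fin n)) {k : ℕ}
    (hk : SimK (gstep G') k (subst HE (sigmaL Nb n)) (subst HF (sigmaL Nb n))) :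
    SimK (gstep G') k (subst HE σ') (subst HF σ') := by
  have hk2 : tracesLe (gstep G') k (subst HE (sigmaL Nb n)) =
      tracesLe (gstep G') k (subst HF (sigmaL Nb n)) := hk
  have iff1 : ∀ u : List (Ab ⊕ Fin n), u.length ≤ k →
      (u ∈ traces (gstep G') (subst HE (sigmaL Nb n)) ↔
       u ∈ traces (gstep G') (subst HF (sigmaL Nb n))) := by
    intro u hu
    constructor
    · intro h
      have h' : u ∈ tracesLe (gstep G') k (subst HE (sigmaL Nb n)) := ⟨h, hu⟩
      rw [hk2] at h'
      exact h'.1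
    · intro h
      have h' : u ∈ tracesLe (gstep G') k (subst HF (sigmaL Nb n)) := ⟨h, hu⟩
      rw [← hk2] at h'
      exact h'.1
  show tracesLe _ k _ = tracesLe _ k _
  ext w
  show (w ∈ traces _ _ ∧ w.length ≤ k) ↔ (w ∈ traces _ _ ∧ w.length ≤ k)
  constructor
  · rintro ⟨h, hlen⟩
    exact ⟨main_transfer hdet hrules w σ' HE HF hInvE hInvF
      (fun u hu => iff1 u (le_trans hu hlen)) h, hlen⟩
  · rintro ⟨h, hlen⟩
    exact ⟨main_transfer hdet hrules w σ' HF HE hInvF hInvE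
      (fun u hu => (iff1 u (le_trans hu hlen)).symm) h, hlen⟩

end Main


/-- the critical instance `(E(L₁,…,Lₙ), F(L₁,…,Lₙ))`, obtained by extending
the grammar with fresh nullary nonterminals `Lᵢ` having the single rule `Lᵢ →^{ℓᵢ} Lᵢ`
for fresh actions `ℓᵢ`, has the least eq-level among all ground instances
`(E(T₁,…,Tₙ), F(T₁,…,Tₙ))`. -/
theorem critical_instance_least_eqLevel {N A : Type} [Fintype N] [Fintype A]
    (G : FOG N A) (hdet : G.Det) (n : ℕ) (E F : Tm N)
    (hEreg : TmRegular E) (hEwf : TmWF G.arity E) (hEvars : VarsBdd n E)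
    (hFreg : TmRegular F) (hFwf : TmWF G.arity F) (hFvars : VarsBdd n F)
    (G' : FOG (N ⊕ Fin n) (A ⊕ Fin n))
    (harity : G'.arity = Sum.elim G.arity fun _ => 0)
    (hrules : G'.rules =
      ((fun r : N × A × Tm N =>
          ((Sum.inl r.1 : N ⊕ Fin n),
            ((Sum.inl r.2.1 : A ⊕ Fin n), embTm (Sum.inl : N → N ⊕ Fin n) r.2.2)))
        '' G.rules) ∪
      (Set.range fun i : Fin n =>
        ((Sum.inr i : N ⊕ Fin n), ((Sum.inr i : A ⊕ Fin n), constL N n i))))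
    (τ : ℕ → Tm N)
    (hτ : ∀ j, 1 ≤ j → j ≤ n → TmGround (τ j) ∧ TmRegular (τ j) ∧ TmWF G.arity (τ j)) :
    eqLevel (gstep G')
        (subst (embTm Sum.inl E) (sigmaL N n))
        (subst (embTm Sum.inl F) (sigmaL N n)) ≤
      eqLevel (gstep G')
        (subst (embTm Sum.inl E) (fun j => embTm Sum.inl (τ j)))
        (subst (embTm Sum.inl F) (fun j => embTm Sum.inl (τ j))) := by
  unfold eqLevel
  refine iSup₂_le fun k hk => ?_
  have hInvE : Inv n (embTm Sum.inl E) := inv_embTm hEwf hEvars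
  have hInvF : Inv n (embTm Sum.inl F) := inv_embTm hFwf hFvars
  have hk' : SimK (gstep G') k
      (subst (embTm Sum.inl E) fun j => embTm Sum.inl (τ j))
      (subst (embTm Sum.inl F) fun j => embTm Sum.inl (τ j)) :=
    simK_transfer hdet hrules hInvE hInvF _ hk
  exact le_biSup (fun k : ℕ => (k : ℕ∞)) hk'

end FOGPaper
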